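/- For 2 ≤ p ≤ q ≤ ∞, the Banach–Mazur distance between ℓ_p^n and ℓ_q^n equals n^{1/p − 1/q}; in particular d(ℓ_p^n, ℓ_∞^n) = n^{1/p} for p ∈ [2,∞]. -/

import Mathlib

open scoped ENNReal

/-- The multiplicative Banach–Mazur distance between two normed spaces:
`inf {‖T‖·‖T⁻¹‖ : T an isomorphism from X onto Y}`. -/
noncomputable def dBM (X Y : Type*) [NormedAddCommGroup X] [NormedSpace ℝ X]
    [NormedAddCommGroup Y] [NormedSpace ℝ Y] : ℝ :=
  sInf {c : ℝ | ∃ T : X ≃L[ℝ] Y, c = ‖(T : X →L[ℝ] Y)‖ * ‖(T.symm : Y →L[ℝ] X)‖}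

open scoped NNReal
open Finset

namespace BMaux


lemma add_rpow_le_rpow_add_real {x y r : ℝ} (hx : 0 ≤ x) (hy : 0 ≤ y) (hr : 1 ≤ r) :
    x ^ r + y ^ r ≤ (x + y) ^ r := by
  have h := NNReal.add_rpow_le_rpow_add x.toNNReal y.toNNReal hr
  rw [← NNReal.coe_le_coe] at h
  push_cast [NNReal.coe_rpow] at h
  rwa [Real.coe_toNNReal x hx, Real.coe_toNNReal y hy] at h

lemma sum_rpow_le_rpow_sum {ι : Type*} (s : Finset ι) (b : ι → ℝ) (hb : ∀ i, 0 ≤ b i)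
    {r : ℝ} (hr : 1 ≤ r) :
    ∑ i ∈ s, b i ^ r ≤ (∑ i ∈ s, b i) ^ r := by
  induction s using Finset.cons_induction with
  | empty => simp [Real.zero_rpow (by positivity : r ≠ 0)]
  | cons a s ha ih =>
    rw [Finset.sum_cons, Finset.sum_cons]
    calc b a ^ r + ∑ i ∈ s, b i ^ r ≤ b a ^ r + (∑ i ∈ s, b i) ^ r := by linarith
    _ ≤ (b a + ∑ i ∈ s, b i) ^ r :=
        add_rpow_le_rpow_add_real (hb a) (Finset.sum_nonneg fun i _ => hb i) hr

lemma nnreal_two_ineq {r : ℝ} (hr : 2 ≤ r) {x y u v : ℝ≥0}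
    (h : u ^ (2:ℝ) + v ^ (2:ℝ) = 2 * (x ^ (2:ℝ) + y ^ (2:ℝ))) :
    x ^ r + y ^ r ≤ (u ^ r + v ^ r) / 2 := by
  have h2 : (1:ℝ) ≤ r / 2 := by linarith
  have e1 : ∀ w : ℝ≥0, (w ^ (2:ℝ)) ^ (r/2) = w ^ r := by
    intro w; rw [← NNReal.rpow_mul, show (2:ℝ) * (r/2) = r by ring]
  have A : x ^ r + y ^ r ≤ (x ^ (2:ℝ) + y ^ (2:ℝ)) ^ (r/2) := by
    calc x ^ r + y ^ r = (x^(2:ℝ))^(r/2) + (y^(2:ℝ))^(r/2) := by rw [e1, e1]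
    _ ≤ _ := NNReal.add_rpow_le_rpow_add _ _ h2
  have hmid : ((1:ℝ≥0)/2) * u^(2:ℝ) + (1/2) * v^(2:ℝ) = x^(2:ℝ) + y^(2:ℝ) := by
    calc ((1:ℝ≥0)/2) * u^(2:ℝ) + (1/2) * v^(2:ℝ) = (u^(2:ℝ) + v^(2:ℝ))/2 := by
          rw [add_div, one_div_mul_eq_div, one_div_mul_eq_div]
    _ = (2 * (x^(2:ℝ) + y^(2:ℝ)))/2 := by rw [h]
    _ = x^(2:ℝ) + y^(2:ℝ) := mul_div_cancel_left₀ _ two_ne_zero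
  have B := NNReal.rpow_arith_mean_le_arith_mean2_rpow (1/2) (1/2) (u^(2:ℝ)) (v^(2:ℝ))
      (by rw [one_div, ← two_mul, mul_inv_cancel₀ (two_ne_zero)]) h2
  rw [hmid, e1, e1] at B
  calc x ^ r + y ^ r ≤ (x ^ (2:ℝ) + y ^ (2:ℝ)) ^ (r/2) := A
  _ ≤ (1/2) * u ^ r + (1/2) * v ^ r := B
  _ = (u ^ r + v ^ r) / 2 := by rw [add_div, one_div_mul_eq_div, one_div_mul_eq_div]

lemma abs_rpow_ineq {r : ℝ} (hr : 2 ≤ r) (a b : ℝ) :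
    |a| ^ r + |b| ^ r ≤ (|a + b| ^ r + |a - b| ^ r) / 2 := by
  have key : ‖a‖₊ ^ r + ‖b‖₊ ^ r ≤ (‖a+b‖₊ ^ r + ‖a-b‖₊ ^ r) / 2 := by
    apply nnreal_two_ineq hr
    rw [← NNReal.coe_inj]
    push_cast [NNReal.coe_rpow, coe_nnnorm]
    simp only [Real.norm_eq_abs]
    rw [show ((2:ℝ)) = ((2:ℕ):ℝ) by norm_num]
    rw [Real.rpow_natCast, Real.rpow_natCast, Real.rpow_natCast, Real.rpow_natCast]
    simp only [sq_abs]
    ring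
  rw [← NNReal.coe_le_coe] at key
  push_cast [NNReal.coe_rpow, coe_nnnorm] at key
  simpa [Real.norm_eq_abs] using key

lemma exists_signs {V : Type*} [AddCommGroup V] [Module ℝ V] (f : V → ℝ)
    (h0 : 0 ≤ f 0) (hf : ∀ u v : V, f u + f v ≤ (f (u + v) + f (u - v)) / 2)
    {ι : Type*} [DecidableEq ι] (s : Finset ι) (y : ι → V) :
    ∃ ε : ι → ℝ, (∀ i, ε i = 1 ∨ ε i = -1) ∧
      ∑ i ∈ s, f (y i) ≤ f (∑ i ∈ s, ε i • y i) := by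
  induction s using Finset.cons_induction with
  | empty => exact ⟨fun _ => 1, fun _ => Or.inl rfl, by simpa using h0⟩
  | cons a s ha ih =>
    obtain ⟨ε, hε, hs⟩ := ih
    set S := ∑ i ∈ s, ε i • y i with hS
    have key := hf S (y a)
    rcases le_total (f (S - y a)) (f (S + y a)) with hc | hc
    · refine ⟨Function.update ε a 1, fun i => ?_, ?_⟩
      · rcases eq_or_ne i a with rfl | hi
        · simp
        · rw [Function.update_of_ne hi]; exact hε i
      · rw [Finset.sum_cons, Finset.sum_cons]
        have hsum : ∑ i ∈ s, Function.update ε a 1 i • y i = S := by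
          refine Finset.sum_congr rfl fun i hi => ?_
          rw [Function.update_of_ne (by rintro rfl; exact ha hi)]
        rw [hsum, Function.update_self, one_smul, add_comm (y a) S]
        have h1 : f S + f (y a) ≤ f (S + y a) := by linarith
        have h2 : ∑ i ∈ s, f (y i) ≤ f S := hs
        linarith
    · refine ⟨Function.update ε a (-1), fun i => ?_, ?_⟩
      · rcases eq_or_ne i a with rfl | hi
        · simp
        · rw [Function.update_of_ne hi]; exact hε i
      · rw [Finset.sum_cons, Finset.sum_cons]
        have hsum : ∑ i ∈ s, Function.update ε a (-1) i • y i = S := by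
          refine Finset.sum_congr rfl fun i hi => ?_
          rw [Function.update_of_ne (by rintro rfl; exact ha hi)]
        rw [hsum, Function.update_self, neg_one_smul, add_comm (-y a) S, ← sub_eq_add_neg]
        have h1 : f S + f (y a) ≤ f (S - y a) := by linarith
        have h2 : ∑ i ∈ s, f (y i) ≤ f S := hs
        linarith
variable {n : ℕ}

lemma norm_le_norm_aux (p q : ℝ≥0∞) [Fact (1 ≤ p)] [Fact (1 ≤ q)] (hpq : p ≤ q)
    (x : Fin n → ℝ) :
    ‖(WithLp.equiv q (Fin n → ℝ)).symm x‖ ≤ ‖(WithLp.equiv p (Fin n → ℝ)).symm x‖ := by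
  have hp1 : 1 ≤ p := Fact.out
  by_cases hpt : p = ∞
  · subst hpt
    have hq : q = ∞ := top_le_iff.mp hpq
    subst hq
    exact le_rfl
  · have hp0 : p ≠ 0 := (zero_lt_one.trans_le hp1).ne'
    have hpr : 0 < p.toReal := ENNReal.toReal_pos hp0 hpt
    by_cases hqt : q = ∞
    · subst hqt
      rw [PiLp.norm_eq_ciSup, PiLp.norm_eq_sum hpr]
      simp only [WithLp.equiv_symm_apply, PiLp.toLp_apply]
      refine Real.iSup_le (fun i => ?_) (by positivity)
      have h1 : ‖x i‖ ^ p.toReal ≤ ∑ j, ‖x j‖ ^ p.toReal :=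
        Finset.single_le_sum (f := fun j => ‖x j‖ ^ p.toReal) (fun j _ => by positivity)
          (Finset.mem_univ i)
      calc ‖x i‖ = (‖x i‖ ^ p.toReal) ^ (1/p.toReal) := by
            rw [← Real.rpow_mul (norm_nonneg _), mul_one_div, div_self hpr.ne', Real.rpow_one]
      _ ≤ _ := Real.rpow_le_rpow (by positivity) h1 (by positivity)
    · have hq0 : q ≠ 0 := (zero_lt_one.trans_le (hp1.trans hpq)).ne'
      have hqr : 0 < q.toReal := ENNReal.toReal_pos hq0 hqt
      have hprq : p.toReal ≤ q.toReal := ENNReal.toReal_mono hqt hpq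
      set s := q.toReal / p.toReal with hs
      have hs1 : 1 ≤ s := (one_le_div hpr).2 hprq
      rw [PiLp.norm_eq_sum hpr, PiLp.norm_eq_sum hqr]
      simp only [WithLp.equiv_symm_apply, PiLp.toLp_apply]
      have key : ∑ i, ‖x i‖ ^ q.toReal ≤ (∑ i, ‖x i‖ ^ p.toReal) ^ s := by
        have hcg : ∀ i : Fin n, ‖x i‖ ^ q.toReal = (‖x i‖ ^ p.toReal) ^ s := by
          intro i
          rw [← Real.rpow_mul (norm_nonneg _)]
          congr 1
          rw [hs]
          field_simp
        rw [Finset.sum_congr rfl (fun i _ => hcg i)]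
        exact sum_rpow_le_rpow_sum Finset.univ _ (fun i => by positivity) hs1
      calc (∑ i, ‖x i‖ ^ q.toReal) ^ (1/q.toReal)
          ≤ ((∑ i, ‖x i‖ ^ p.toReal) ^ s) ^ (1/q.toReal) :=
            Real.rpow_le_rpow (by positivity) key (by positivity)
      _ = (∑ i, ‖x i‖ ^ p.toReal) ^ (1/p.toReal) := by
            rw [← Real.rpow_mul (by positivity)]
            congr 1
            rw [hs]
            field_simp
lemma toReal_exp_eq (p q : ℝ≥0∞) (hp0 : p ≠ 0) (hpt : p ≠ ∞) (hpq : p ≤ q) :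
    ((1/p - 1/q : ℝ≥0∞)).toReal = p.toReal⁻¹ - (1/q : ℝ≥0∞).toReal := by
  have h : 1/q ≤ 1/p := by
    rw [one_div, one_div]
    exact ENNReal.inv_le_inv' hpq
  rw [ENNReal.toReal_sub_of_le h (by
    rw [one_div]
    exact ENNReal.inv_ne_top.2 hp0)]
  rw [one_div, ENNReal.toReal_inv]

lemma norm_le_card_mul_norm (hn : 0 < n) (p q : ℝ≥0∞) [Fact (1 ≤ p)] [Fact (1 ≤ q)]
    (hpq : p ≤ q) (x : Fin n → ℝ) :
    ‖(WithLp.equiv p (Fin n → ℝ)).symm x‖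
      ≤ (n : ℝ) ^ ((1/p - 1/q : ℝ≥0∞)).toReal * ‖(WithLp.equiv q (Fin n → ℝ)).symm x‖ := by
  have hp1 : 1 ≤ p := Fact.out
  have hnR : (0:ℝ) < (n:ℝ) := by exact_mod_cast hn
  haveI : Nonempty (Fin n) := Fin.pos_iff_nonempty.mp hn
  by_cases hpt : p = ∞
  · subst hpt
    have hq : q = ∞ := top_le_iff.mp hpq
    subst hq
    simp
  · have hp0 : p ≠ 0 := (zero_lt_one.trans_le hp1).ne'
    have hpr : 0 < p.toReal := ENNReal.toReal_pos hp0 hpt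
    rw [toReal_exp_eq p q hp0 hpt hpq]
    by_cases hqt : q = ∞
    · subst hqt
      rw [PiLp.norm_eq_ciSup, PiLp.norm_eq_sum hpr]
      simp only [WithLp.equiv_symm_apply, PiLp.toLp_apply]
      have hM : 0 ≤ ⨆ j, ‖x j‖ := Real.iSup_nonneg fun j => norm_nonneg _
      have hle : ∀ i : Fin n, ‖x i‖ ≤ ⨆ j, ‖x j‖ := fun i =>
        le_ciSup (f := fun j : Fin n => ‖x j‖) (Set.Finite.bddAbove (Set.finite_range _)) i
      have hsum : ∑ i, ‖x i‖ ^ p.toReal ≤ (n:ℝ) * (⨆ j, ‖x j‖) ^ p.toReal := by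
        calc ∑ i, ‖x i‖ ^ p.toReal ≤ ∑ _i : Fin n, (⨆ j, ‖x j‖) ^ p.toReal :=
              Finset.sum_le_sum fun i _ =>
                Real.rpow_le_rpow (norm_nonneg _) (hle i) hpr.le
        _ = (n:ℝ) * (⨆ j, ‖x j‖) ^ p.toReal := by
              rw [Finset.sum_const, Finset.card_univ, Fintype.card_fin, nsmul_eq_mul]
      have exp0 : ((1:ℝ≥0∞)/∞).toReal = 0 := by simp
      rw [exp0, sub_zero]
      calc (∑ i, ‖x i‖ ^ p.toReal) ^ (1/p.toReal)
          ≤ ((n:ℝ) * (⨆ j, ‖x j‖) ^ p.toReal) ^ (1/p.toReal) :=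
            Real.rpow_le_rpow (by positivity) hsum (by positivity)
      _ = (n:ℝ) ^ p.toReal⁻¹ * ⨆ j, ‖x j‖ := by
            rw [Real.mul_rpow hnR.le (by positivity), ← Real.rpow_mul hM,
              mul_one_div, div_self hpr.ne', Real.rpow_one, one_div]
    · have hq0 : q ≠ 0 := (zero_lt_one.trans_le (hp1.trans hpq)).ne'
      have hqr : 0 < q.toReal := ENNReal.toReal_pos hq0 hqt
      have hprq : p.toReal ≤ q.toReal := ENNReal.toReal_mono hqt hpq
      set s := q.toReal / p.toReal with hs
      have hs1 : 1 ≤ s := (one_le_div hpr).2 hprq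
      rw [PiLp.norm_eq_sum hpr, PiLp.norm_eq_sum hqr]
      simp only [WithLp.equiv_symm_apply, PiLp.toLp_apply]
      have hexpq : ((1:ℝ≥0∞)/q).toReal = q.toReal⁻¹ := by
        rw [one_div, ENNReal.toReal_inv]
      rw [hexpq]
      -- power mean inequality with weights 1/n
      have hpm := Real.rpow_arith_mean_le_arith_mean_rpow Finset.univ
        (fun _ : Fin n => 1/(n:ℝ)) (fun i => ‖x i‖ ^ p.toReal)
        (fun i _ => by positivity)
        (by rw [Finset.sum_const, Finset.card_univ, Fintype.card_fin, nsmul_eq_mul]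
            field_simp)
        (fun i _ => by positivity) hs1
      have hz : ∀ i : Fin n, (‖x i‖ ^ p.toReal) ^ s = ‖x i‖ ^ q.toReal := by
        intro i
        rw [← Real.rpow_mul (norm_nonneg _), hs]
        congr 1
        field_simp
      rw [Finset.sum_congr rfl (fun i _ => by rw [mul_comm]) ,
        ← Finset.sum_mul] at hpm
      -- hpm : ((∑ z) * (1/n)) ^ s ≤ ∑ (1/n) * z^s
      have hpm2 : (∑ i, ‖x i‖ ^ p.toReal) ^ s * ((1:ℝ)/n) ^ s
          ≤ (1/(n:ℝ)) * ∑ i, ‖x i‖ ^ q.toReal := by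
        calc (∑ i, ‖x i‖ ^ p.toReal) ^ s * ((1:ℝ)/n) ^ s
            = ((∑ i, ‖x i‖ ^ p.toReal) * (1/(n:ℝ))) ^ s := by
              rw [Real.mul_rpow (by positivity) (by positivity)]
        _ ≤ ∑ i, 1/(n:ℝ) * (‖x i‖ ^ p.toReal) ^ s := hpm
        _ = (1/(n:ℝ)) * ∑ i, ‖x i‖ ^ q.toReal := by
              rw [← Finset.mul_sum]
              congr 1
              exact Finset.sum_congr rfl fun i _ => by rw [hz i]
      -- deduce (∑ z)^s ≤ n^(s-1) * ∑ |x|^q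
      have hns : (0:ℝ) < ((1:ℝ)/n) ^ s := by positivity
      have hpm3 : (∑ i, ‖x i‖ ^ p.toReal) ^ s
          ≤ (n:ℝ) ^ (s - 1) * ∑ i, ‖x i‖ ^ q.toReal := by
        have h1 := mul_le_mul_of_nonneg_right hpm2 (inv_nonneg.2 hns.le)
        rw [mul_assoc, mul_inv_cancel₀ hns.ne', mul_one] at h1
        refine h1.trans (le_of_eq ?_)
        have hnspos : (0:ℝ) < (n:ℝ) ^ s := by positivity
        rw [Real.rpow_sub hnR, Real.rpow_one]
        rw [Real.div_rpow zero_le_one hnR.le, Real.one_rpow]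
        field_simp
      calc (∑ i, ‖x i‖ ^ p.toReal) ^ (1/p.toReal)
          = ((∑ i, ‖x i‖ ^ p.toReal) ^ s) ^ (1/q.toReal) := by
            rw [← Real.rpow_mul (by positivity), hs]
            congr 1
            field_simp
      _ ≤ ((n:ℝ) ^ (s - 1) * ∑ i, ‖x i‖ ^ q.toReal) ^ (1/q.toReal) :=
            Real.rpow_le_rpow (by positivity) hpm3 (by positivity)
      _ = (n:ℝ) ^ (p.toReal⁻¹ - q.toReal⁻¹) * (∑ i, ‖x i‖ ^ q.toReal) ^ (1/q.toReal) := by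
            rw [Real.mul_rpow (by positivity) (by positivity),
              ← Real.rpow_mul hnR.le]
            congr 2
            rw [hs]
            field_simp
lemma norm_signs (hn : 0 < n) (q : ℝ≥0∞) [Fact (1 ≤ q)] (ε : Fin n → ℝ)
    (hε : ∀ i, ε i = 1 ∨ ε i = -1) :
    ‖(WithLp.equiv q (Fin n → ℝ)).symm ε‖ = (n : ℝ) ^ ((1/q : ℝ≥0∞)).toReal := by
  haveI : Nonempty (Fin n) := Fin.pos_iff_nonempty.mp hn
  have habs : ∀ i, ‖ε i‖ = 1 := fun i => by rcases hε i with h | h <;> simp [h]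
  by_cases hqt : q = ∞
  · subst hqt
    rw [PiLp.norm_eq_ciSup]
    simp only [WithLp.equiv_symm_apply, PiLp.toLp_apply, habs]
    simp
  · have hq0 : q ≠ 0 := (zero_lt_one.trans_le Fact.out).ne'
    have hqr : 0 < q.toReal := ENNReal.toReal_pos hq0 hqt
    rw [PiLp.norm_eq_sum hqr]
    simp only [WithLp.equiv_symm_apply, PiLp.toLp_apply, habs, Real.one_rpow]
    rw [Finset.sum_const, Finset.card_univ, Fintype.card_fin, nsmul_eq_mul, mul_one]
    congr 1
    rw [one_div, one_div, ENNReal.toReal_inv]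

lemma sum_abs_rpow_eq_norm (p : ℝ≥0∞) [Fact (1 ≤ p)] (hpr : 0 < p.toReal)
    (u : PiLp p (fun _ : Fin n => ℝ)) :
    ∑ j, |u j| ^ p.toReal = ‖u‖ ^ p.toReal := by
  rw [PiLp.norm_eq_sum hpr, ← Real.rpow_mul (Finset.sum_nonneg fun j _ => by positivity),
    one_div, inv_mul_cancel₀ hpr.ne', Real.rpow_one]
  simp [Real.norm_eq_abs]

lemma f_ineq (p : ℝ≥0∞) [Fact (1 ≤ p)] (hpr2 : 2 ≤ p.toReal)
    (u v : PiLp p (fun _ : Fin n => ℝ)) :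
    (∑ j, |u j| ^ p.toReal) + (∑ j, |v j| ^ p.toReal)
      ≤ ((∑ j, |(u + v) j| ^ p.toReal) + (∑ j, |(u - v) j| ^ p.toReal)) / 2 := by
  rw [← Finset.sum_add_distrib, ← Finset.sum_add_distrib, Finset.sum_div]
  refine Finset.sum_le_sum fun j _ => ?_
  have h := abs_rpow_ineq hpr2 (u j) (v j)
  simpa [PiLp.add_apply, PiLp.sub_apply] using h

lemma one_le_AB (hn : 0 < n) (p q : ℝ≥0∞) [Fact (1 ≤ p)] [Fact (1 ≤ q)]
    (T : PiLp p (fun _ : Fin n => ℝ) ≃L[ℝ] PiLp q (fun _ : Fin n => ℝ)) :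
    1 ≤ ‖(T : PiLp p (fun _ : Fin n => ℝ) →L[ℝ] PiLp q (fun _ : Fin n => ℝ))‖
        * ‖(T.symm : PiLp q (fun _ : Fin n => ℝ) →L[ℝ] PiLp p (fun _ : Fin n => ℝ))‖ := by
  set X := PiLp p (fun _ : Fin n => ℝ)
  set Y := PiLp q (fun _ : Fin n => ℝ)
  set A := ‖(T : X →L[ℝ] Y)‖ with hA
  set B := ‖(T.symm : Y →L[ℝ] X)‖ with hB
  set e0 : Y := (WithLp.equiv q (Fin n → ℝ)).symm (Pi.single (⟨0, hn⟩ : Fin n) 1) with he0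
  have hnorme : ‖e0‖ = 1 := by
    rw [he0]
    exact (show ‖(WithLp.equiv q (Fin n → ℝ)).symm (Pi.single (⟨0, hn⟩ : Fin n) (1:ℝ))‖ = ‖(1:ℝ)‖ from
      PiLp.norm_toLp_single ..).trans
      norm_one
  have h1 : ‖e0‖ ≤ A * ‖T.symm e0‖ := by
    calc ‖e0‖ = ‖T (T.symm e0)‖ := by rw [T.apply_symm_apply]
    _ ≤ A * ‖T.symm e0‖ := by
        have h := (T : X →L[ℝ] Y).le_opNorm (T.symm e0)
        simpa using h
  have h2 : ‖T.symm e0‖ ≤ B * ‖e0‖ := by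
    have h := (T.symm : Y →L[ℝ] X).le_opNorm e0
    simpa using h
  have hA0 : 0 ≤ A := norm_nonneg _
  calc (1:ℝ) = ‖e0‖ := hnorme.symm
  _ ≤ A * ‖T.symm e0‖ := h1
  _ ≤ A * (B * ‖e0‖) := mul_le_mul_of_nonneg_left h2 hA0
  _ = A * B := by rw [hnorme, mul_one]

lemma lower_bound (hn : 0 < n) (p q : ℝ≥0∞) [Fact (1 ≤ p)] [Fact (1 ≤ q)]
    (hp : 2 ≤ p) (hpq : p ≤ q) (hpt : p ≠ ∞)
    (T : PiLp p (fun _ : Fin n => ℝ) ≃L[ℝ] PiLp q (fun _ : Fin n => ℝ)) :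
    (n : ℝ) ^ ((1/p - 1/q : ℝ≥0∞)).toReal
      ≤ ‖(T : PiLp p (fun _ : Fin n => ℝ) →L[ℝ] PiLp q (fun _ : Fin n => ℝ))‖
        * ‖(T.symm : PiLp q (fun _ : Fin n => ℝ) →L[ℝ] PiLp p (fun _ : Fin n => ℝ))‖ := by
  classical
  haveI : Nonempty (Fin n) := Fin.pos_iff_nonempty.mp hn
  set X := PiLp p (fun _ : Fin n => ℝ)
  set Y := PiLp q (fun _ : Fin n => ℝ)
  have hnR : (0:ℝ) < (n:ℝ) := by exact_mod_cast hn
  have hp0 : p ≠ 0 := (zero_lt_one.trans_le (one_le_two.trans hp)).ne'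
  have hpr : 0 < p.toReal := ENNReal.toReal_pos hp0 hpt
  have hpr2 : 2 ≤ p.toReal := by
    have h := ENNReal.toReal_mono hpt hp
    simpa using h
  set A := ‖(T : X →L[ℝ] Y)‖ with hA
  set B := ‖(T.symm : Y →L[ℝ] X)‖ with hB
  have hA0 : 0 ≤ A := norm_nonneg _
  have hB0 : 0 ≤ B := norm_nonneg _
  set e : Fin n → Y := fun i => (WithLp.equiv q (Fin n → ℝ)).symm (Pi.single i 1) with he
  have hnorme : ∀ i, ‖e i‖ = 1 := fun i => by
    rw [he]
    exact (show ‖(WithLp.equiv q (Fin n → ℝ)).symm (Pi.single i (1:ℝ))‖ = ‖(1:ℝ)‖ from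
      PiLp.norm_toLp_single ..).trans norm_one
  have hyA : ∀ y : Y, ‖y‖ ≤ A * ‖T.symm y‖ := by
    intro y
    calc ‖y‖ = ‖T (T.symm y)‖ := by rw [T.apply_symm_apply]
    _ ≤ A * ‖T.symm y‖ := by
        have h := (T : X →L[ℝ] Y).le_opNorm (T.symm y)
        simpa using h
  have hyB : ∀ y : Y, ‖T.symm y‖ ≤ B * ‖y‖ := by
    intro y
    have h := (T.symm : Y →L[ℝ] X).le_opNorm y
    simpa using h
  have hApos : 0 < A := by
    have h1 := hyA (e ⟨0, hn⟩)
    rw [hnorme] at h1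
    nlinarith [norm_nonneg (T.symm (e ⟨0, hn⟩))]
  set f : X → ℝ := fun u => ∑ j, |u j| ^ p.toReal with hfdef
  have h0 : 0 ≤ f 0 := Finset.sum_nonneg fun j _ => by positivity
  have hfi : ∀ u v : X, f u + f v ≤ (f (u + v) + f (u - v)) / 2 := fun u v =>
    f_ineq p hpr2 u v
  have hfe_lower : ∀ i, (1/A) ^ p.toReal ≤ f (T.symm (e i)) := by
    intro i
    have h1 : 1/A ≤ ‖T.symm (e i)‖ := by
      rw [div_le_iff₀ hApos]
      calc (1:ℝ) = ‖e i‖ := (hnorme i).symm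
      _ ≤ A * ‖T.symm (e i)‖ := hyA (e i)
      _ = ‖T.symm (e i)‖ * A := mul_comm _ _
    have h2 : f (T.symm (e i)) = ‖T.symm (e i)‖ ^ p.toReal :=
      sum_abs_rpow_eq_norm p hpr _
    rw [h2]
    exact Real.rpow_le_rpow (by positivity) h1 hpr.le
  obtain ⟨ε, hε, hkey⟩ := exists_signs f h0 hfi Finset.univ (fun i => T.symm (e i))
  set xe : Y := (WithLp.equiv q (Fin n → ℝ)).symm (fun i => ε i) with hxedef
  have hxe : ∑ i, ε i • e i = xe := by
    have h1 : (WithLp.linearEquiv q ℝ (Fin n → ℝ)) (∑ i, ε i • e i) = fun i => ε i := by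
      rw [map_sum]
      funext j
      rw [Finset.sum_apply]
      have h2 : ∀ i : Fin n, ((WithLp.linearEquiv q ℝ (Fin n → ℝ)) (ε i • e i)) j
          = ε i * (Pi.single i (1:ℝ) : Fin n → ℝ) j := by
        intro i
        rw [map_smul]
        simp [he, WithLp.linearEquiv_apply, Equiv.apply_symm_apply, Pi.smul_apply,
          smul_eq_mul]
      rw [Finset.sum_congr rfl fun i _ => h2 i]
      simp [Pi.single_apply, mul_ite]
    have h2 := congrArg (WithLp.linearEquiv q ℝ (Fin n → ℝ)).symm h1
    rw [LinearEquiv.symm_apply_apply] at h2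
    rw [h2, hxedef]
    simp [WithLp.linearEquiv_symm_apply]
  have hT_sum : ∑ i, ε i • T.symm (e i) = T.symm xe := by
    calc ∑ i, ε i • T.symm (e i) = ∑ i, T.symm (ε i • e i) := by
          refine Finset.sum_congr rfl fun i _ => ?_
          rw [map_smul]
    _ = T.symm (∑ i, ε i • e i) := (map_sum (T.symm : Y ≃L[ℝ] X) _ _).symm
    _ = T.symm xe := by rw [hxe]
  set qi : ℝ := ((1/q : ℝ≥0∞)).toReal with hqi
  have hqi0 : 0 ≤ qi := ENNReal.toReal_nonneg
  have hupper : f (T.symm xe) ≤ (B * (n:ℝ) ^ qi) ^ p.toReal := by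
    have h2 : f (T.symm xe) = ‖T.symm xe‖ ^ p.toReal := sum_abs_rpow_eq_norm p hpr _
    rw [h2]
    refine Real.rpow_le_rpow (norm_nonneg _) ?_ hpr.le
    calc ‖T.symm xe‖ ≤ B * ‖xe‖ := hyB xe
    _ = B * (n:ℝ) ^ qi := by rw [hxedef, norm_signs hn q ε hε]
  have hsum_lower : (n:ℝ) * (1/A) ^ p.toReal ≤ ∑ i, f (T.symm (e i)) := by
    calc (n:ℝ) * (1/A) ^ p.toReal = ∑ _i : Fin n, (1/A) ^ p.toReal := by
          rw [Finset.sum_const, Finset.card_univ, Fintype.card_fin, nsmul_eq_mul]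
    _ ≤ ∑ i, f (T.symm (e i)) := Finset.sum_le_sum fun i _ => hfe_lower i
  have main : (n:ℝ) * (1/A) ^ p.toReal ≤ (B * (n:ℝ) ^ qi) ^ p.toReal := by
    calc (n:ℝ) * (1/A) ^ p.toReal ≤ ∑ i, f (T.symm (e i)) := hsum_lower
    _ ≤ f (∑ i, ε i • T.symm (e i)) := hkey
    _ = f (T.symm xe) := by rw [hT_sum]
    _ ≤ (B * (n:ℝ) ^ qi) ^ p.toReal := hupper
  have hBpos : 0 < B := by
    rcases hB0.lt_or_eq with h | h
    · exact h
    · exfalso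
      rw [← h, zero_mul, Real.zero_rpow hpr.ne'] at main
      have hpos : 0 < (n:ℝ) * (1/A) ^ p.toReal := by positivity
      linarith
  rw [toReal_exp_eq p q hp0 hpt hpq, ← hqi]
  have h2 : (n:ℝ) ^ (1 - qi * p.toReal) ≤ (A * B) ^ p.toReal := by
    have hmain2 : (n:ℝ) ≤ (A*B) ^ p.toReal * (n:ℝ) ^ (qi * p.toReal) := by
      have e1 : (B * (n:ℝ) ^ qi) ^ p.toReal = B ^ p.toReal * (n:ℝ) ^ (qi * p.toReal) := by
        rw [Real.mul_rpow hBpos.le (by positivity), ← Real.rpow_mul hnR.le]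
      have e2 : ((1:ℝ)/A) ^ p.toReal = (A ^ p.toReal)⁻¹ := by
        rw [Real.div_rpow zero_le_one hApos.le, Real.one_rpow, one_div]
      rw [e1, e2] at main
      have hApr : 0 < A ^ p.toReal := by positivity
      have h3 := mul_le_mul_of_nonneg_right main hApr.le
      rw [mul_assoc, inv_mul_cancel₀ hApr.ne', mul_one] at h3
      calc (n:ℝ) ≤ B ^ p.toReal * (n:ℝ) ^ (qi * p.toReal) * A ^ p.toReal := h3
      _ = (A*B) ^ p.toReal * (n:ℝ) ^ (qi * p.toReal) := by
          rw [Real.mul_rpow hApos.le hBpos.le]; ring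
    rw [Real.rpow_sub hnR, Real.rpow_one, div_le_iff₀ (by positivity)]
    exact hmain2
  have h3 := Real.rpow_le_rpow (by positivity) h2 (by positivity : (0:ℝ) ≤ 1/p.toReal)
  rw [← Real.rpow_mul hnR.le, ← Real.rpow_mul (mul_nonneg hApos.le hBpos.le)] at h3
  have hexp : (1 - qi * p.toReal) * (1/p.toReal) = p.toReal⁻¹ - qi := by
    field_simp
  rw [hexp, mul_one_div, div_self hpr.ne', Real.rpow_one] at h3
  exact h3


lemma dBM_eq (n : ℕ) (hn : 0 < n) (p q : ℝ≥0∞)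
    [Fact (1 ≤ p)] [Fact (1 ≤ q)] (hp : 2 ≤ p) (hpq : p ≤ q) :
    dBM (PiLp p fun _ : Fin n => ℝ) (PiLp q fun _ : Fin n => ℝ)
      = (n : ℝ) ^ ((1 / p - 1 / q : ℝ≥0∞).toReal) := by
  classical
  set X := PiLp p (fun _ : Fin n => ℝ) with hX
  set Y := PiLp q (fun _ : Fin n => ℝ) with hY
  set E : ℝ := ((1 / p - 1 / q : ℝ≥0∞)).toReal with hE
  have hE0 : 0 ≤ E := ENNReal.toReal_nonneg
  have hnR : (0:ℝ) < (n:ℝ) := by exact_mod_cast hn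
  set T₀ : X ≃L[ℝ] Y :=
    LinearEquiv.toContinuousLinearEquiv
      ((WithLp.linearEquiv p ℝ (Fin n → ℝ)).trans (WithLp.linearEquiv q ℝ (Fin n → ℝ)).symm)
    with hT₀def
  have hT₀ : ∀ x : X, T₀ x
      = (WithLp.equiv q (Fin n → ℝ)).symm ((WithLp.equiv p (Fin n → ℝ)) x) := fun x => rfl
  have hT₀s : ∀ y : Y, T₀.symm y
      = (WithLp.equiv p (Fin n → ℝ)).symm ((WithLp.equiv q (Fin n → ℝ)) y) := fun y => rfl
  have hTn : ‖(T₀ : X →L[ℝ] Y)‖ ≤ 1 := by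
    refine ContinuousLinearMap.opNorm_le_bound _ zero_le_one fun x => ?_
    rw [one_mul]
    have h1 : (T₀ : X →L[ℝ] Y) x = T₀ x := rfl
    rw [h1, hT₀ x]
    have h2 := norm_le_norm_aux p q hpq ((WithLp.equiv p (Fin n → ℝ)) x)
    calc ‖(WithLp.equiv q (Fin n → ℝ)).symm ((WithLp.equiv p (Fin n → ℝ)) x)‖
        ≤ ‖(WithLp.equiv p (Fin n → ℝ)).symm ((WithLp.equiv p (Fin n → ℝ)) x)‖ := h2
    _ = ‖x‖ := by rw [Equiv.symm_apply_apply]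
  have hTsn : ‖(T₀.symm : Y →L[ℝ] X)‖ ≤ (n:ℝ) ^ E := by
    refine ContinuousLinearMap.opNorm_le_bound _ (by positivity) fun y => ?_
    have h1 : (T₀.symm : Y →L[ℝ] X) y = T₀.symm y := rfl
    rw [h1, hT₀s y]
    have h2 := norm_le_card_mul_norm hn p q hpq ((WithLp.equiv q (Fin n → ℝ)) y)
    calc ‖(WithLp.equiv p (Fin n → ℝ)).symm ((WithLp.equiv q (Fin n → ℝ)) y)‖
        ≤ (n:ℝ) ^ E * ‖(WithLp.equiv q (Fin n → ℝ)).symm ((WithLp.equiv q (Fin n → ℝ)) y)‖ := h2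
    _ = (n:ℝ) ^ E * ‖y‖ := by rw [Equiv.symm_apply_apply]
  have hbdd : BddBelow
      {c : ℝ | ∃ T : X ≃L[ℝ] Y, c = ‖(T : X →L[ℝ] Y)‖ * ‖(T.symm : Y →L[ℝ] X)‖} := by
    refine ⟨0, ?_⟩
    rintro c ⟨T, rfl⟩
    positivity
  have hnemp : {c : ℝ | ∃ T : X ≃L[ℝ] Y,
      c = ‖(T : X →L[ℝ] Y)‖ * ‖(T.symm : Y →L[ℝ] X)‖}.Nonempty :=
    ⟨_, T₀, rfl⟩
  unfold dBM
  apply le_antisymm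
  · refine csInf_le_of_le hbdd ⟨T₀, rfl⟩ ?_
    calc ‖(T₀ : X →L[ℝ] Y)‖ * ‖(T₀.symm : Y →L[ℝ] X)‖ ≤ 1 * ((n:ℝ) ^ E) :=
        mul_le_mul hTn hTsn (norm_nonneg _) zero_le_one
    _ = (n:ℝ) ^ E := one_mul _
  · refine le_csInf hnemp ?_
    rintro c ⟨T, rfl⟩
    by_cases hpt : p = ∞
    · have hq : q = ∞ := top_le_iff.mp (hpt ▸ hpq)
      have hE1 : E = 0 := by rw [hE, hpt, hq]; simp
      rw [hE1, Real.rpow_zero]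
      exact one_le_AB hn p q T
    · exact lower_bound hn p q hp hpq hpt T

end BMaux

/-- For `2 ≤ p ≤ q ≤ ∞`, the Banach–Mazur distance between `ℓ_p^n` and `ℓ_q^n`
equals `n^{1/p − 1/q}`; in particular `d(ℓ_p^n, ℓ_∞^n) = n^{1/p}` for
`p ∈ [2,∞]`. -/
theorem bm_lpn_lqn_eq (n : ℕ) (hn : 0 < n) (p q : ℝ≥0∞)
    [Fact (1 ≤ p)] [Fact (1 ≤ q)] (hp : 2 ≤ p) (hpq : p ≤ q) :
    dBM (PiLp p fun _ : Fin n => ℝ) (PiLp q fun _ : Fin n => ℝ)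
      = (n : ℝ) ^ ((1 / p - 1 / q : ℝ≥0∞).toReal) ∧
    dBM (PiLp p fun _ : Fin n => ℝ) (PiLp ∞ fun _ : Fin n => ℝ)
      = (n : ℝ) ^ ((1 / p : ℝ≥0∞).toReal) := by
  constructor
  · exact BMaux.dBM_eq n hn p q hp hpq
  · haveI : Fact ((1:ℝ≥0∞) ≤ ∞) := ⟨le_top⟩
    have h := BMaux.dBM_eq n hn p ∞ hp le_top
    simpa using h
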